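/- Fix M ≥ 2 and δ ∈ (0, 1 - 1/M). With α = 1/M + δ and β = 1/M - δ/(M-1), the updated value δ' defined by α²/(α² + (M-1)β²) = 1/M + δ' satisfies δ' = δ(δM² - 2δM + 2M - 2)/(δ²M² + M - 1), and moreover δ < δ' < 1 - 1/M. -/

import Mathlib

theorem stmt_5 (M : ℕ) (hM : 2 ≤ M) (δ : ℝ) (hδ : δ ∈ Set.Ioo (0:ℝ) (1 - 1/(M:ℝ)))
    (α β : ℝ) (hα : α = 1/(M:ℝ) + δ) (hβ : β = 1/(M:ℝ) - δ/((M:ℝ) - 1))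
    (δ' : ℝ) (hδ' : α^2 / (α^2 + ((M:ℝ) - 1) * β^2) = 1/(M:ℝ) + δ') :
    δ' = δ * (δ * (M:ℝ)^2 - 2 * δ * (M:ℝ) + 2 * (M:ℝ) - 2) / (δ^2 * (M:ℝ)^2 + (M:ℝ) - 1) ∧
    δ < δ' ∧ δ' < 1 - 1/(M:ℝ) := by
  obtain ⟨hδ0, hδu⟩ := hδ
  have hm : (2:ℝ) ≤ (M:ℝ) := by exact_mod_cast hM
  have hm0 : (0:ℝ) < (M:ℝ) := by linarith
  have hm1 : (0:ℝ) < (M:ℝ) - 1 := by linarith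
  have hmn : (M:ℝ) ≠ 0 := ne_of_gt hm0
  have hm1n : (M:ℝ) - 1 ≠ 0 := ne_of_gt hm1
  -- δ * M < M - 1
  have hδm : δ * (M:ℝ) < (M:ℝ) - 1 := by
    have := (mul_lt_mul_of_pos_right hδu hm0)
    calc δ * (M:ℝ) < (1 - 1/(M:ℝ)) * (M:ℝ) := this
      _ = (M:ℝ) - 1 := by field_simp
  have hα0 : 0 < α := by
    rw [hα]; positivity
  have hS : 0 < α^2 + ((M:ℝ) - 1) * β^2 := by positivity
  have hSn : α^2 + ((M:ℝ) - 1) * β^2 ≠ 0 := ne_of_gt hS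
  have hD : (0:ℝ) < δ^2 * (M:ℝ)^2 + (M:ℝ) - 1 := by nlinarith [sq_nonneg δ, sq_nonneg (M:ℝ)]
  have hDn : δ^2 * (M:ℝ)^2 + (M:ℝ) - 1 ≠ 0 := ne_of_gt hD
  have h1 : δ' = δ * (δ * (M:ℝ)^2 - 2 * δ * (M:ℝ) + 2 * (M:ℝ) - 2) / (δ^2 * (M:ℝ)^2 + (M:ℝ) - 1) := by
    have h : δ' = α^2 / (α^2 + ((M:ℝ) - 1) * β^2) - 1/(M:ℝ) := by linarith [hδ']
    rw [h, hα, hβ, eq_div_iff hDn]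
    field_simp
    ring
  refine ⟨h1, ?_, ?_⟩
  · rw [h1]
    rw [lt_div_iff₀ hD]
    nlinarith [mul_pos hδ0 (sub_pos.mpr hδm), mul_pos (mul_pos hδ0 hm0) (sub_pos.mpr hδm)]
  · rw [h1]
    rw [div_lt_iff₀ hD]
    have key : (0:ℝ) < (δ * (M:ℝ) - ((M:ℝ) - 1))^2 := by
      have : δ * (M:ℝ) - ((M:ℝ) - 1) ≠ 0 := by linarith
      positivity
    have h2 : (1 - 1/(M:ℝ)) * (δ^2 * (M:ℝ)^2 + (M:ℝ) - 1) - δ * (δ * (M:ℝ)^2 - 2 * δ * (M:ℝ) + 2 * (M:ℝ) - 2) = (δ * (M:ℝ) - ((M:ℝ) - 1))^2 / (M:ℝ) := by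
      field_simp
      ring
    nlinarith [div_pos key hm0]
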